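/- arXiv:2206.01155 — 7 statements merged into one kernel-verified Lean document; each statement's English description precedes it below -/
import Mathlib

section
/- Let C be a Strong Cauchy structure on X satisfying the generalized Fréchet–Wilson condition: for all sequences {x_n}, {z_n} ∈ s(X) and {y_n} ∈ C, if both interleaved sequences {x_n}⊓{y_n} and {y_n}⊓{z_n} belong to C, then {x_n}⊓{z_n} ∈ C. Then for every {x_n} ∈ C, the set CLim{x_n} = {x ∈ X : ⟨x⟩⊓{x_n} ∈ C} contains at most one point; i.e., (X, CLim) is a C-Fréchet space. -/
/-- The interleaved (alternating) sequence (x₀, y₀, x₁, y₁, ...). -/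
def altSeq {X : Type*} (x y : ℕ → X) : ℕ → X :=
  fun n => if n % 2 = 0 then x (n / 2) else y (n / 2)

/-- A Strong Cauchy structure satisfying the generalized Fréchet–Wilson
condition yields a C-Fréchet space: `CLim {x_n}` has at most one point for `{x_n} ∈ C`. -/
theorem stmt_3 {X : Type*} (C : Set (ℕ → X))
    (hshift : ∀ x ∈ C, (fun n => x (n + 1)) ∈ C)
    (hconst : ∀ a : X, (fun _ => a) ∈ C)
    (hper : ∀ n : ℕ, 0 < n → ∀ p : ℕ → X, (∀ k, p (k + n) = p k) → p ∈ C →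
      p 0 = p (n - 1))
    (hFW : ∀ x z y : ℕ → X, y ∈ C → altSeq x y ∈ C → altSeq y z ∈ C → altSeq x z ∈ C)
    (x : ℕ → X) (hx : x ∈ C) (a b : X)
    (ha : altSeq (fun _ => a) x ∈ C) (hb : altSeq (fun _ => b) x ∈ C) :
    a = b := by
  -- shift of altSeq ⟨b⟩ x is altSeq x ⟨b⟩
  have hxb : altSeq x (fun _ => b) ∈ C := by
    have := hshift _ hb
    have heq : (fun n => altSeq (fun _ => b) x (n + 1)) = altSeq x (fun _ => b) := by
      funext n
      simp only [altSeq]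
      rcases Nat.even_or_odd n with ⟨m, hm⟩ | ⟨m, hm⟩ <;> subst hm
      · rw [if_neg (by omega), if_pos (by omega)]
        congr 1
        omega
      · rw [if_pos (by omega), if_neg (by omega)]
    rwa [heq] at this
  have hab : altSeq (fun _ => a) (fun _ => b) ∈ C := hFW _ _ x hx ha hxb
  have hperiodic : ∀ k, altSeq (fun _ => a) (fun _ => b) (k + 2) =
      altSeq (fun _ => a) (fun _ => b) k := by
    intro k
    simp only [altSeq]
    have : (k + 2) % 2 = k % 2 := by omega
    rw [this]
  have := hper 2 (by norm_num) _ hperiodic hab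
  simpa [altSeq] using this
end

section
/- Let (Y, Lim_Y) be a Lim-space such that every constant sequence ⟨α⟩ is convergent and Lim_Y⟨α⟩ = Lim_Y⟨β⟩ implies α = β. Let d: X² → Y be a Y-valued distance, i.e., d(x,y) = d(y,x) = d(x,x) = d(y,y) implies x = y. Then the family C_d, consisting of all sequences {x_n} in X such that for all index sequences {m_k}, {n_k} tending to infinity the sequence {d(x_{m_k}, x_{n_k})} converges in Y with limit set independent of the choice of {m_k}, {n_k}, is a Strong Cauchy structure; in particular, if a periodic sequence ⟨z₁,...,z_n⟩ belongs to C_d then z₁ = z_n. -/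
open Filter

/-- The Cauchy structure defined by a `Y`-valued distance `d`: sequences such that
`d(x_{m_k}, x_{n_k})` converges with limit set independent of the index sequences. -/
def CdStruct {X Y : Type*} (LimY : (ℕ → Y) → Set Y) (d : X → X → Y) (x : ℕ → X) : Prop :=
  ∃ L : Set Y, L.Nonempty ∧ ∀ m n : ℕ → ℕ, Tendsto m atTop atTop → Tendsto n atTop atTop →
    LimY (fun k => d (x (m k)) (x (n k))) = L

/-- If constant sequences in `Y` converge and `Lim_Y` is injective on
constant sequences, then `C_d` is a Strong Cauchy structure. -/
theorem stmt_5 {X Y : Type*} (LimY : (ℕ → Y) → Set Y)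
    (hshiftY : ∀ y : ℕ → Y, LimY y = LimY (fun n => y (n + 1)))
    (hconstY : ∀ α : Y, (LimY (fun _ => α)).Nonempty)
    (hinjY : ∀ α β : Y, LimY (fun _ => α) = LimY (fun _ => β) → α = β)
    (d : X → X → Y)
    (hd : ∀ x y : X, d x y = d y x → d y x = d x x → d x x = d y y → x = y) :
    (∀ x : ℕ → X, CdStruct LimY d x → CdStruct LimY d (fun n => x (n + 1))) ∧
    (∀ a : X, CdStruct LimY d (fun _ => a)) ∧
    (∀ n : ℕ, 0 < n → ∀ p : ℕ → X, (∀ k, p (k + n) = p k) → CdStruct LimY d p →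
      p 0 = p (n - 1)) := by
  refine ⟨?_, ?_, ?_⟩
  · rintro x ⟨L, hL, h⟩
    exact ⟨L, hL, fun m n hm hn =>
      h (fun k => m k + 1) (fun k => n k + 1)
        (tendsto_atTop_mono (fun k => Nat.le_succ _) hm)
        (tendsto_atTop_mono (fun k => Nat.le_succ _) hn)⟩
  · intro a
    exact ⟨LimY (fun _ => d a a), hconstY _, fun m n hm hn => rfl⟩
  · rintro n hn p hper ⟨L, hL, h⟩
    have hmul : ∀ r k : ℕ, p (k * n + r) = p r := by
      intro r k
      induction k with
      | zero => simp
      | succ k ih =>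
        have : (k + 1) * n + r = (k * n + r) + n := by ring
        rw [this, hper, ih]
    have hten : ∀ r : ℕ, Tendsto (fun k => k * n + r) atTop atTop := by
      intro r
      apply tendsto_atTop_mono (f := id) (fun k => ?_) tendsto_id
      calc (k : ℕ) = k * 1 := (mul_one k).symm
        _ ≤ k * n + r := by
          have := Nat.mul_le_mul_left k hn
          omega
    have key : ∀ r s : ℕ, LimY (fun _ => d (p r) (p s)) = L := by
      intro r s
      have := h (fun k => k * n + r) (fun k => k * n + s) (hten r) (hten s)
      simpa [hmul] using this
    have e1 : d (p 0) (p (n - 1)) = d (p (n - 1)) (p 0) :=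
      hinjY _ _ ((key 0 (n - 1)).trans (key (n - 1) 0).symm)
    have e2 : d (p (n - 1)) (p 0) = d (p 0) (p 0) :=
      hinjY _ _ ((key (n - 1) 0).trans (key 0 0).symm)
    have e3 : d (p 0) (p 0) = d (p (n - 1)) (p (n - 1)) :=
      hinjY _ _ ((key 0 0).trans (key (n - 1) (n - 1)).symm)
    exact hd _ _ e1 e2 e3
end

section
/- Let (X, Lim) be a Lim-space, C a Cauchy structure on X, and suppose (X, Lim) is C-complete (every sequence in C with pairwise distinct elements is convergent, i.e., has nonempty Lim). Let f: X → X be weakly orbital continuous (for every orbit sequence {x_n} = O(f, x₀) that is convergent, Lim{f(x_n)} = f(Lim{x_n})) and locally orbital contractive at some x₀ ∈ X (meaning the orbit O(f, x₀) either lies in C and has pairwise distinct elements, or has a repeated element). Then f has a nonempty fixed set, i.e., there exists a nonempty A ⊆ X with f(A) = A. -/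
/-- In a C-complete Lim-space, a weakly orbital continuous mapping that is
locally orbital contractive at some point has a nonempty fixed set. -/
theorem stmt_6 {X : Type*} (Lim : (ℕ → X) → Set X)
    (hLim : ∀ x : ℕ → X, Lim x = Lim (fun n => x (n + 1)))
    (C : Set (ℕ → X))
    (hC : ∀ x ∈ C, (fun n => x (n + 1)) ∈ C)
    (hcomplete : ∀ x ∈ C, Function.Injective x → (Lim x).Nonempty)
    (f : X → X)
    (hcont : ∀ x0 : X, (Lim (fun n => f^[n] x0)).Nonempty →
      Lim (fun n => f (f^[n] x0)) = f '' Lim (fun n => f^[n] x0))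
    (x0 : X)
    (hcontr : ((fun n => f^[n] x0) ∈ C ∧ Function.Injective (fun n => f^[n] x0)) ∨
      ¬ Function.Injective (fun n => f^[n] x0)) :
    ∃ A : Set X, A.Nonempty ∧ f '' A = A := by
  rcases hcontr with ⟨hmem, hinj⟩ | hninj
  · have hne : (Lim (fun n => f^[n] x0)).Nonempty := hcomplete _ hmem hinj
    refine ⟨Lim (fun n => f^[n] x0), hne, ?_⟩
    have h1 := hcont x0 hne
    have h2 : (fun n => f (f^[n] x0)) = fun n => f^[n + 1] x0 := by
      funext n; rw [Function.iterate_succ_apply']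
    rw [h2] at h1
    rw [← h1, ← hLim (fun n => f^[n] x0)]
  · simp only [Function.Injective, not_forall] at hninj
    obtain ⟨a, b, hab, hne⟩ := hninj
    -- wlog a < b
    obtain ⟨m, n, hmn, heq⟩ : ∃ m n : ℕ, m < n ∧ f^[m] x0 = f^[n] x0 := by
      rcases lt_or_gt_of_ne hne with h | h
      · exact ⟨a, b, h, hab⟩
      · exact ⟨b, a, h, hab.symm⟩
    refine ⟨{x | ∃ k, m ≤ k ∧ x = f^[k] x0}, ⟨f^[m] x0, m, le_refl m, rfl⟩, ?_⟩
    ext y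
    constructor
    · rintro ⟨z, ⟨k, hk, rfl⟩, rfl⟩
      exact ⟨k + 1, le_trans hk (Nat.le_succ k), (Function.iterate_succ_apply' f k x0).symm⟩
    · rintro ⟨k, hk, rfl⟩
      rcases eq_or_lt_of_le hk with rfl | hlt
      · refine ⟨f^[n - 1] x0, ⟨n - 1, ?_, rfl⟩, ?_⟩
        · omega
        · rw [← Function.iterate_succ_apply' f (n-1) x0,
            show (n-1).succ = n from by omega, ← heq]
      · refine ⟨f^[k - 1] x0, ⟨k - 1, by omega, rfl⟩, ?_⟩
        rw [← Function.iterate_succ_apply' f (k-1) x0,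
          show (k-1).succ = k from by omega]
end

section
/- Let (X, Lim) be a C-complete Lim-space that is moreover a C-Fréchet space (Lim of every convergent sequence in C is a singleton), where C is a Strong Cauchy structure. Let f: X → X be weakly orbital continuous and suppose the orbit O(f, x₀) belongs to C for some x₀. Then f has a fixed point. -/
lemma shift_mem_aux {X : Type*} (C : Set (ℕ → X))
    (hshift : ∀ x ∈ C, (fun n => x (n + 1)) ∈ C) :
    ∀ i : ℕ, ∀ x ∈ C, (fun n => x (n + i)) ∈ C := by
  intro i
  induction i with
  | zero => intro x hx; simpa using hx
  | succ k ih =>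
      intro x hx
      have := ih _ (hshift x hx)
      simpa [Nat.add_comm, Nat.add_assoc, Nat.add_left_comm] using this

/-- In a C-complete C-Fréchet Lim-space with `C` a Strong Cauchy
structure, a weakly orbital continuous map whose orbit at some point lies in `C`
has a fixed point. -/
theorem stmt_10 {X : Type*} (Lim : (ℕ → X) → Set X)
    (hLim : ∀ x : ℕ → X, Lim x = Lim (fun n => x (n + 1)))
    (C : Set (ℕ → X))
    (hshift : ∀ x ∈ C, (fun n => x (n + 1)) ∈ C)
    (hconst : ∀ a : X, (fun _ => a) ∈ C)
    (hper : ∀ n : ℕ, 0 < n → ∀ p : ℕ → X, (∀ m, p (m + n) = p m) → p ∈ C →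
      p 0 = p (n - 1))
    (hcomplete : ∀ x ∈ C, Function.Injective x → (Lim x).Nonempty)
    (hfrechet : ∀ x ∈ C, (Lim x).Nonempty → ∃ a : X, Lim x = {a})
    (f : X → X)
    (hcont : ∀ x0 : X, (Lim (fun n => f^[n] x0)).Nonempty →
      Lim (fun n => f (f^[n] x0)) = f '' Lim (fun n => f^[n] x0))
    (x0 : X) (horb : (fun n => f^[n] x0) ∈ C) :
    ∃ x : X, f x = x := by
  by_cases hinj : Function.Injective (fun n => f^[n] x0)
  · have hne := hcomplete _ horb hinj
    obtain ⟨b, hb⟩ := hfrechet _ horb hne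
    have h1 := hcont x0 hne
    have h2 := hLim (fun n => f^[n] x0)
    have h3 : (fun n => f (f^[n] x0)) = (fun n => f^[(n + 1)] x0) := by
      funext n; rw [Function.iterate_succ_apply']
    rw [h3, ← h2, hb] at h1
    have : f b ∈ ({b} : Set X) := by
      rw [h1]; exact ⟨b, rfl, rfl⟩
    exact ⟨b, this⟩
  · rw [Function.not_injective_iff] at hinj
    obtain ⟨i, j, hij, hne'⟩ := hinj
    -- wlog i < j
    rcases Nat.lt_or_ge i j with h | h
    case _ =>
      set n := j - i with hn
      have hnpos : 0 < n := Nat.sub_pos_of_lt h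
      set p : ℕ → X := fun k => f^[i + k] x0 with hp
      have hperiod : ∀ m, p (m + n) = p m := by
        intro m
        have : i + (m + n) = m + j := by omega
        simp only [hp, this]
        have : f^[m + j] x0 = f^[m] (f^[j] x0) := by
          rw [Function.iterate_add_apply]
        rw [this, ← hij, ← Function.iterate_add_apply]
        congr 1; omega
      have hpC : p ∈ C := by
        have := shift_mem_aux C hshift i _ horb
        simpa [hp, Nat.add_comm] using this
      have key := hper n hnpos p hperiod hpC
      refine ⟨f^[i + (n - 1)] x0, ?_⟩
      have h4 : f (f^[i + (n - 1)] x0) = f^[i + n] x0 := by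
        rw [show i + n = (i + (n - 1)) + 1 by omega, Function.iterate_succ_apply']
      rw [h4]
      have h5 : f^[i + n] x0 = f^[j] x0 := by congr 1; omega
      rw [h5, ← hij]
      have := key
      simp only [hp, Nat.add_zero] at this
      exact this
    case _ =>
      have h' : j < i := lt_of_le_of_ne h (fun e => hne' e.symm)
      set n := i - j with hn
      have hnpos : 0 < n := Nat.sub_pos_of_lt h'
      set p : ℕ → X := fun k => f^[j + k] x0 with hp
      have hperiod : ∀ m, p (m + n) = p m := by
        intro m
        have : j + (m + n) = m + i := by omega
        simp only [hp, this]
        have : f^[m + i] x0 = f^[m] (f^[i] x0) := by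
          rw [Function.iterate_add_apply]
        rw [this, hij, ← Function.iterate_add_apply]
        congr 1; omega
      have hpC : p ∈ C := by
        have := shift_mem_aux C hshift j _ horb
        simpa [hp, Nat.add_comm] using this
      have key := hper n hnpos p hperiod hpC
      refine ⟨f^[j + (n - 1)] x0, ?_⟩
      have h4 : f (f^[j + (n - 1)] x0) = f^[j + n] x0 := by
        rw [show j + n = (j + (n - 1)) + 1 by omega, Function.iterate_succ_apply']
      rw [h4]
      have h5 : f^[j + n] x0 = f^[i] x0 := by congr 1; omega
      rw [h5, hij]
      have := key
      simp only [hp, Nat.add_zero] at this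
      exact this
end

section
/- (Caristi-type boundedness of orbit.) Let Y be a partially ordered set, ψ: ⋃_n Xⁿ → Y satisfy ψ(x₂,...,x_n) ≤ ψ(x₁,...,x_n), and suppose there is ψ̄: (⋃_n Xⁿ) × Y → Y with: ψ(x₁,...,x_n) ≤ ψ̄(x₁,...,x_n, y) for all y; ψ̄(x₁,...,x_n, y) ≤ ψ̄(x₁,...,x_{n-1}, ψ̄(x_n, y)); and y ≤ z implies ψ̄(x₁,...,x_n, y) ≤ ψ̄(x₁,...,x_n, z). If f: X → X and φ: X → Y satisfy ψ̄(x, φ(f(x))) ≤ φ(x) for all x in the orbit O(f, x₀), then setting x_n = fⁿ(x₀), for every n ≥ 1 one has ψ̄(x₀, x₁, ..., x_{n-1}, φ(x_n)) ≤ φ(x₀); consequently ψ(x₀, x₁, ..., x_n) ≤ φ(x₀) for all n, i.e., the sequence {ψ(x₀,...,x_n)} is bounded above by φ(x₀). -/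
/-- Caristi-type boundedness of the orbit: under the Caristi condition
`ψ̄(x, φ(f(x))) ≤ φ(x)` on the orbit, one has
`ψ̄(x₀, ..., x_{n-1}, φ(x_n)) ≤ φ(x₀)` for all `n ≥ 1`, and consequently
`ψ(x₀, ..., x_n) ≤ φ(x₀)` for all `n`. Finite tuples are encoded as lists. -/
theorem stmt_13 {X Y : Type*} [PartialOrder Y]
    (ψ : List X → Y) (ψb : List X → Y → Y)
    (hψ : ∀ (x : X) (l : List X), ψ l ≤ ψ (x :: l))
    (hmaj : ∀ (l : List X) (y : Y), ψ l ≤ ψb l y)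
    (hcompose : ∀ (l : List X) (x : X) (y : Y), ψb (l ++ [x]) y ≤ ψb l (ψb [x] y))
    (hmono : ∀ l : List X, Monotone (ψb l))
    (f : X → X) (φ : X → Y) (x0 : X)
    (hcar : ∀ x ∈ {y : X | ∃ n : ℕ, y = f^[n] x0}, ψb [x] (φ (f x)) ≤ φ x) :
    (∀ n : ℕ, 1 ≤ n →
      ψb ((List.range n).map (fun i => f^[i] x0)) (φ (f^[n] x0)) ≤ φ x0) ∧
    (∀ n : ℕ, ψ ((List.range (n + 1)).map (fun i => f^[i] x0)) ≤ φ x0) := by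
  have key : ∀ n : ℕ, 1 ≤ n →
      ψb ((List.range n).map (fun i => f^[i] x0)) (φ (f^[n] x0)) ≤ φ x0 := by
    intro n hn
    induction n with
    | zero => omega
    | succ m ih =>
      rcases Nat.eq_or_lt_of_le hn with h1 | h1
      · simp only [← h1]
        simpa using hcar x0 ⟨0, rfl⟩
      · have hm : 1 ≤ m := by omega
        have hrange : List.range (m + 1) = List.range m ++ [m] := by
          simp [List.range_succ]
        rw [hrange, List.map_append]
        calc ψb ((List.range m).map (fun i => f^[i] x0) ++ [f^[m] x0]) (φ (f^[m+1] x0))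
            ≤ ψb ((List.range m).map (fun i => f^[i] x0))
                (ψb [f^[m] x0] (φ (f^[m+1] x0))) := hcompose _ _ _
          _ ≤ ψb ((List.range m).map (fun i => f^[i] x0)) (φ (f^[m] x0)) := by
              apply hmono
              rw [Function.iterate_succ_apply']
              exact hcar _ ⟨m, rfl⟩
          _ ≤ φ x0 := ih hm
  refine ⟨key, fun n => ?_⟩
  calc ψ ((List.range (n + 1)).map (fun i => f^[i] x0))
      ≤ ψb ((List.range (n + 1)).map (fun i => f^[i] x0)) (φ (f^[n+1] x0)) := hmaj _ _
    _ ≤ φ x0 := key (n + 1) (by omega)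
end

section
/- (Caristi-type fixed set theorem.) Let Y be a partially ordered set, ψ: ⋃_n Xⁿ → Y with ψ(x₂,...,x_n) ≤ ψ(x₁,...,x_n), and let (X, Lim) be a C_ψ-complete Lim-space, where C_ψ is the family of sequences {x_n} for which {ψ(x₁,...,x_n)} is bounded from above in Y. Suppose there is ψ̄: (⋃_n Xⁿ) × Y → Y satisfying ψ(x₁,...,x_n) ≤ ψ̄(x₁,...,x_n, y), ψ̄(x₁,...,x_n, y) ≤ ψ̄(x₁,...,x_{n-1}, ψ̄(x_n, y)), and monotonicity in the last argument. If f: X → X is weakly orbital continuous and there exist φ: X → Y and x₀ ∈ X such that ψ̄(x, φ(f(x))) ≤ φ(x) for all x ∈ O(f, x₀), then f has a nonempty fixed set. -/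
/-- The Cauchy structure `C_ψ`: sequences whose `ψ`-values of initial segments are
bounded from above. -/
def CpsiStruct {X Y : Type*} [PartialOrder Y] (ψ : List X → Y) (x : ℕ → X) : Prop :=
  ∃ α : Y, ∀ n : ℕ, ψ ((List.range (n + 1)).map x) ≤ α

/-- Caristi-type fixed set theorem: in a C_ψ-complete Lim-space, a weakly
orbital continuous map satisfying the Caristi condition on some orbit has a nonempty
fixed set. -/
theorem stmt_14 {X Y : Type*} [PartialOrder Y]
    (ψ : List X → Y)
    (hψ : ∀ (x : X) (l : List X), ψ l ≤ ψ (x :: l))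
    (Lim : (ℕ → X) → Set X)
    (hLim : ∀ x : ℕ → X, Lim x = Lim (fun n => x (n + 1)))
    (hcomplete : ∀ x : ℕ → X, CpsiStruct ψ x → Function.Injective x → (Lim x).Nonempty)
    (ψb : List X → Y → Y)
    (hmaj : ∀ (l : List X) (y : Y), ψ l ≤ ψb l y)
    (hcompose : ∀ (l : List X) (x : X) (y : Y), ψb (l ++ [x]) y ≤ ψb l (ψb [x] y))
    (hmono : ∀ l : List X, Monotone (ψb l))
    (f : X → X)
    (hcont : ∀ x0 : X, (Lim (fun n => f^[n] x0)).Nonempty →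
      Lim (fun n => f (f^[n] x0)) = f '' Lim (fun n => f^[n] x0))
    (φ : X → Y) (x0 : X)
    (hcar : ∀ x ∈ {y : X | ∃ n : ℕ, y = f^[n] x0}, ψb [x] (φ (f x)) ≤ φ x) :
    ∃ A : Set X, A.Nonempty ∧ f '' A = A := by
  set x : ℕ → X := fun n => f^[n] x0 with hx
  have hstep : ∀ k : ℕ, x (k + 1) = f (x k) := fun k =>
    Function.iterate_succ_apply' f k x0
  by_cases hinj : Function.Injective x
  · -- injective case
    have key : ∀ n : ℕ, ψb ((List.range (n + 1)).map x) (φ (x (n + 1))) ≤ φ x0 := by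
      intro n
      induction n with
      | zero =>
        have := hcar (x 0) ⟨0, rfl⟩
        simpa [hstep 0] using (show ψb [x 0] (φ (f (x 0))) ≤ φ x0 from this)
      | succ n ih =>
        have hrange : (List.range (n + 2)).map x = (List.range (n + 1)).map x ++ [x (n + 1)] := by
          rw [List.range_succ, List.map_append]; rfl
        rw [hrange]
        calc ψb ((List.range (n + 1)).map x ++ [x (n + 1)]) (φ (x (n + 2)))
            ≤ ψb ((List.range (n + 1)).map x) (ψb [x (n + 1)] (φ (x (n + 2)))) :=
              hcompose _ _ _
          _ ≤ ψb ((List.range (n + 1)).map x) (φ (x (n + 1))) := by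
              apply hmono
              rw [hstep (n + 1)]
              exact hcar (x (n + 1)) ⟨n + 1, rfl⟩
          _ ≤ φ x0 := ih
    have hC : CpsiStruct ψ x :=
      ⟨φ x0, fun n => le_trans (hmaj _ (φ (x (n + 1)))) (key n)⟩
    have hne : (Lim x).Nonempty := hcomplete x hC hinj
    refine ⟨Lim x, hne, ?_⟩
    have h1 : Lim (fun n => f (f^[n] x0)) = f '' Lim x := hcont x0 hne
    have h2 : Lim x = Lim (fun n => f (f^[n] x0)) := by
      rw [hLim x]
      exact congrArg Lim (funext fun k => hstep k)
    rw [← h1, ← h2]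
  · -- non-injective case: orbit eventually periodic
    rw [Function.Injective] at hinj
    push_neg at hinj
    obtain ⟨a, b, hab, hne⟩ := hinj
    obtain ⟨m, n, hmn, hxe⟩ : ∃ m n, m < n ∧ x m = x n := by
      rcases Nat.lt_trichotomy a b with h | h | h
      · exact ⟨a, b, h, hab⟩
      · exact absurd h hne
      · exact ⟨b, a, h, hab.symm⟩
    refine ⟨x '' {k | m ≤ k}, ⟨x m, m, le_refl m, rfl⟩, ?_⟩
    ext y
    constructor
    · rintro ⟨_, ⟨k, hk, rfl⟩, rfl⟩
      exact ⟨k + 1, le_trans hk (Nat.le_succ k), hstep k⟩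
    · rintro ⟨k, hk, rfl⟩
      rcases lt_or_eq_of_le (show m ≤ k from hk) with h | h
      · refine ⟨x (k - 1), ⟨k - 1, Nat.le_sub_one_of_lt h, rfl⟩, ?_⟩
        rw [← hstep (k - 1), Nat.sub_add_cancel (Nat.one_le_of_lt h)]
      · subst h
        refine ⟨x (n - 1), ⟨n - 1, Nat.le_sub_one_of_lt hmn, rfl⟩, ?_⟩
        rw [← hstep (n - 1), Nat.sub_add_cancel (Nat.one_le_of_lt hmn), ← hxe]
end

section
/- (Ćirić-type fixed set theorem in C_{ψ,d}-complete Lim-spaces.) Let Y be a partially ordered set, d: X² → Y, and ψ: ⋃_n Yⁿ → Y a coordinate-wise non-decreasing map with ψ(y₂,...,y_n) ≤ ψ(y₁,...,y_n). Let (X, Lim) be a C_{ψ,d}-complete Lim-space, where C_{ψ,d} is the family of sequences {x_n} for which {ψ(d(x₁,x₂),...,d(x_{n-1},x_n))} is bounded from above. Suppose λ: Y → Y is non-decreasing and for each y ∈ Y the sequence {ψ(y, λ(y), ..., λⁿ(y))} is bounded from above. Let f: X → X be weakly orbital continuous and x₀ ∈ X be such that: (i) there exists α ∈ Y with d(x,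 y) ≤ α for all x, y ∈ O(f, x₀); (ii) for all n > 1 and x, y ∈ O_n(f, x₀) there exist x', y' ∈ O_{n-1}(f, x₀) with d(x, y) ≤ λ(d(x', y')). Then f has a nonempty fixed set. -/
/-- `O_n(f, x₀) = {f^k(x₀) : k ≥ n}`. -/
def orbFrom {X : Type*} (f : X → X) (x0 : X) (n : ℕ) : Set X :=
  {y : X | ∃ k : ℕ, n ≤ k ∧ y = f^[k] x0}

/-- The Cauchy structure `C_{ψ,d}`: sequences whose `ψ`-values of consecutive-distance
tuples are bounded from above. -/
def CpsidStruct {X Y : Type*} [PartialOrder Y] (ψ : List Y → Y) (d : X → X → Y)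
    (x : ℕ → X) : Prop :=
  ∃ α : Y, ∀ n : ℕ, ψ ((List.range n).map (fun i => d (x i) (x (i + 1)))) ≤ α

/-- Ćirić-type fixed set theorem in C_{ψ,d}-complete Lim-spaces. -/
theorem stmt_16 {X Y : Type*} [PartialOrder Y]
    (d : X → X → Y) (ψ : List Y → Y)
    (hψ : ∀ (y : Y) (l : List Y), ψ l ≤ ψ (y :: l))
    (hψmono : ∀ l₁ l₂ : List Y, List.Forall₂ (· ≤ ·) l₁ l₂ → ψ l₁ ≤ ψ l₂)
    (Lim : (ℕ → X) → Set X)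
    (hLim : ∀ x : ℕ → X, Lim x = Lim (fun n => x (n + 1)))
    (hcomplete : ∀ x : ℕ → X, CpsidStruct ψ d x → Function.Injective x →
      (Lim x).Nonempty)
    (lam : Y → Y) (hmono : Monotone lam)
    (hbddlam : ∀ y : Y, ∃ β : Y, ∀ n : ℕ,
      ψ ((List.range (n + 1)).map (fun i => lam^[i] y)) ≤ β)
    (f : X → X)
    (hcont : ∀ x0 : X, (Lim (fun n => f^[n] x0)).Nonempty →
      Lim (fun n => f (f^[n] x0)) = f '' Lim (fun n => f^[n] x0))
    (x0 : X) (α : Y)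
    (hbdd : ∀ x ∈ orbFrom f x0 0, ∀ y ∈ orbFrom f x0 0, d x y ≤ α)
    (hcontr : ∀ n : ℕ, 1 < n → ∀ x ∈ orbFrom f x0 n, ∀ y ∈ orbFrom f x0 n,
      ∃ x' ∈ orbFrom f x0 (n - 1), ∃ y' ∈ orbFrom f x0 (n - 1),
        d x y ≤ lam (d x' y')) :
    ∃ A : Set X, A.Nonempty ∧ f '' A = A := by
  set y : ℕ → X := fun n => f^[n + 1] x0 with hy
  by_cases hinj : Function.Injective y
  · -- completeness case
    -- key estimate: elements of O_{n+1} are within lam^[n] α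
    have key : ∀ n : ℕ, ∀ a ∈ orbFrom f x0 (n + 1), ∀ b ∈ orbFrom f x0 (n + 1),
        d a b ≤ lam^[n] α := by
      intro n
      induction n with
      | zero =>
        intro a ha b hb
        exact hbdd a ⟨ha.choose, Nat.zero_le _, ha.choose_spec.2⟩
          b ⟨hb.choose, Nat.zero_le _, hb.choose_spec.2⟩
      | succ m ih =>
        intro a ha b hb
        obtain ⟨x', hx', y', hy', hle⟩ := hcontr (m + 2) (by omega) a ha b hb
        have : (m + 2 - 1) = m + 1 := rfl
        rw [this] at hx' hy'
        calc d a b ≤ lam (d x' y') := hle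
          _ ≤ lam (lam^[m] α) := hmono (ih x' hx' y' hy')
          _ = lam^[m + 1] α := (Function.iterate_succ_apply' lam m α).symm
    obtain ⟨β, hβ⟩ := hbddlam α
    have hC : CpsidStruct ψ d y := by
      refine ⟨β, fun n => ?_⟩
      cases n with
      | zero =>
        simpa using (le_trans (hψ α []) (by simpa using hβ 0))
      | succ m =>
        refine le_trans (hψmono _ ((List.range (m + 1)).map fun i => lam^[i] α) ?_)
          (hβ m)
        rw [List.forall₂_map_right_iff, List.forall₂_map_left_iff]
        refine List.forall₂_same.2 (fun i _ => ?_)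
        exact key i (y i) ⟨i + 1, le_refl _, rfl⟩ (y (i + 1)) ⟨i + 2, by omega, rfl⟩
    have hne : (Lim y).Nonempty := hcomplete y hC hinj
    have hx : (fun n => f^[n] x0) = fun n => f^[n] x0 := rfl
    have hshift : Lim (fun n => f^[n] x0) = Lim y := by
      have := hLim (fun n => f^[n] x0)
      simpa [hy] using this
    have hne' : (Lim (fun n => f^[n] x0)).Nonempty := hshift ▸ hne
    have himg := hcont x0 hne'
    have heq : (fun n => f (f^[n] x0)) = y := by
      funext n
      simp [hy, Function.iterate_succ_apply']
    rw [heq, ← hshift] at himg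
    exact ⟨Lim (fun n => f^[n] x0), hne', himg.symm⟩
  · -- cycle case
    rw [Function.not_injective_iff] at hinj
    obtain ⟨a, b, hab, hne⟩ := hinj
    wlog hlt : a < b generalizing a b
    · exact this b a hab.symm (Ne.symm hne) (by omega)
    refine ⟨{z | ∃ k, a + 1 ≤ k ∧ z = f^[k] x0}, ⟨f^[a + 1] x0, a + 1, le_refl _, rfl⟩, ?_⟩
    ext z
    constructor
    · rintro ⟨w, ⟨k, hk, rfl⟩, rfl⟩
      exact ⟨k + 1, by omega, (Function.iterate_succ_apply' f k x0).symm⟩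
    · rintro ⟨k, hk, rfl⟩
      rcases Nat.lt_or_ge k (a + 2) with h | h
      · have hk' : k = a + 1 := by omega
        subst hk'
        refine ⟨f^[b] x0, ⟨b, by omega, rfl⟩, ?_⟩
        have : f^[a + 1] x0 = f^[b + 1] x0 := hab
        rw [this, Function.iterate_succ_apply' f b x0]
      · refine ⟨f^[k - 1] x0, ⟨k - 1, by omega, rfl⟩, ?_⟩
        rw [← Function.iterate_succ_apply' f (k - 1) x0]
        congr 1
        omega
end
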